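/- Let Ω be a non-empty bounded open subset of ℝ^d, θ a unit vector, and A a non-empty subset of ∂Ω. Then A is μ_θ-negligible if and only if P_θ(A ∩ ∂_θ Ω) is λ^{d−1}-negligible, where μ_θ is the directional boundary measure, P_θ the orthogonal projection onto the hyperplane orthogonal to θ, and ∂_θ Ω = {z ∈ ∂Ω : ∃ r > 0, ∀ t ∈ (0,r), z − tθ ∈ Ω}. -/

import Mathlib

open Set MeasureTheory
open scoped RealInnerProductSpace

noncomputable def dirDelta {d : ℕ} (Ω : Set (EuclideanSpace ℝ (Fin d)))
    (θ x : EuclideanSpace ℝ (Fin d)) : ℝ :=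
  sSup {s : ℝ | 0 ≤ s ∧ ∀ t : ℝ, 0 ≤ t → t < s → x + t • θ ∈ Ω}

noncomputable def exitPoint {d : ℕ} (Ω : Set (EuclideanSpace ℝ (Fin d)))
    (θ x : EuclideanSpace ℝ (Fin d)) : EuclideanSpace ℝ (Fin d) :=
  x + dirDelta Ω θ x • θ

noncomputable def dirMeas {d : ℕ} (Ω : Set (EuclideanSpace ℝ (Fin d)))
    (θ : EuclideanSpace ℝ (Fin d)) (A : Set (EuclideanSpace ℝ (Fin d))) : ENNReal :=
  volume {x | x ∈ Ω ∧ exitPoint Ω θ x ∈ A}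

def dirBoundary {d : ℕ} (Ω : Set (EuclideanSpace ℝ (Fin d)))
    (θ : EuclideanSpace ℝ (Fin d)) : Set (EuclideanSpace ℝ (Fin d)) :=
  {z ∈ closure Ω \ Ω | ∃ r : ℝ, 0 < r ∧ ∀ t : ℝ, 0 < t → t < r → z - t • θ ∈ Ω}

noncomputable def hypProj {d : ℕ} (θ x : EuclideanSpace ℝ (Fin d)) :
    EuclideanSpace ℝ (Fin d) :=
  x - ⟪x, θ⟫ • θ


section Aux
variable {d : ℕ} {Ω : Set (EuclideanSpace ℝ (Fin d))} {θ x : EuclideanSpace ℝ (Fin d)}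


lemma zero_mem_dset : (0:ℝ) ∈ {s : ℝ | 0 ≤ s ∧ ∀ t : ℝ, 0 ≤ t → t < s → x + t • θ ∈ Ω} :=
  ⟨le_refl _, fun t ht hts => absurd (lt_of_le_of_lt ht hts) (lt_irrefl 0)⟩

lemma bddAbove_dset (hbd : Bornology.IsBounded Ω) (hθ : ‖θ‖ = 1) :
    BddAbove {s : ℝ | 0 ≤ s ∧ ∀ t : ℝ, 0 ≤ t → t < s → x + t • θ ∈ Ω} := by
  obtain ⟨R, hR⟩ := hbd.subset_closedBall 0
  set c : ℝ := max (R + ‖x‖) 0 with hc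
  refine ⟨c + 1, fun s hs => ?_⟩
  by_contra hlt
  push_neg at hlt
  have hc0 : (0:ℝ) ≤ c := le_max_right _ _
  have hmem : x + (c+1) • θ ∈ Ω := hs.2 _ (by linarith) hlt
  have := hR hmem
  rw [Metric.mem_closedBall, dist_zero_right] at this
  have h1 : ‖(c+1) • θ‖ ≤ ‖x + (c+1) • θ‖ + ‖x‖ := by
    have h := norm_add_le (x + (c+1) • θ) (-x)
    simpa [add_comm] using h
  have h2 : ‖(c+1) • θ‖ = c + 1 := by
    rw [norm_smul, hθ, Real.norm_eq_abs, abs_of_nonneg (by linarith), mul_one]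
  have : c + 1 ≤ R + ‖x‖ := by rw [← h2]; linarith [h1, this]
  have : R + ‖x‖ ≤ c := le_max_left _ _
  linarith

lemma dirDelta_nonneg : 0 ≤ dirDelta Ω θ x :=
  Real.sSup_nonneg (fun s hs => hs.1)

lemma mem_of_lt_dirDelta {t : ℝ} (ht0 : 0 ≤ t) (ht : t < dirDelta Ω θ x) :
    x + t • θ ∈ Ω := by
  obtain ⟨s, hs, hts⟩ := exists_lt_of_lt_csSup ⟨0, zero_mem_dset⟩ ht
  exact hs.2 t ht0 hts

lemma le_dirDelta (hbd : Bornology.IsBounded Ω) (hθ : ‖θ‖ = 1) {s : ℝ}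
    (hs : s ∈ {s : ℝ | 0 ≤ s ∧ ∀ t : ℝ, 0 ≤ t → t < s → x + t • θ ∈ Ω}) :
    s ≤ dirDelta Ω θ x :=
  le_csSup (bddAbove_dset hbd hθ) hs

lemma dirDelta_pos (hopen : IsOpen Ω) (hbd : Bornology.IsBounded Ω) (hθ : ‖θ‖ = 1)
    (hx : x ∈ Ω) : 0 < dirDelta Ω θ x := by
  obtain ⟨ε, hε, hball⟩ := Metric.isOpen_iff.1 hopen x hx
  have : ε/2 ≤ dirDelta Ω θ x := by
    refine le_dirDelta hbd hθ ⟨by linarith, fun t ht0 hts => hball ?_⟩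
    rw [Metric.mem_ball, dist_eq_norm]
    have : ‖x + t • θ - x‖ = t := by
      rw [add_sub_cancel_left, norm_smul, hθ, Real.norm_eq_abs, abs_of_nonneg ht0, mul_one]
    rw [this]; linarith
  linarith

lemma exitPoint_not_mem (hopen : IsOpen Ω) (hbd : Bornology.IsBounded Ω) (hθ : ‖θ‖ = 1) :
    exitPoint Ω θ x ∉ Ω := by
  intro hmem
  obtain ⟨ε, hε, hball⟩ := Metric.isOpen_iff.1 hopen _ hmem
  set δ := dirDelta Ω θ x with hδ
  have : δ + ε/2 ≤ δ := by
    refine le_dirDelta hbd hθ ⟨by linarith [dirDelta_nonneg (Ω := Ω) (θ := θ) (x := x)], fun t ht0 hts => ?_⟩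
    rcases lt_or_ge t δ with h | h
    · exact mem_of_lt_dirDelta ht0 h
    · refine hball ?_
      rw [Metric.mem_ball, dist_eq_norm, exitPoint]
      have : x + t • θ - (x + δ • θ) = (t - δ) • θ := by
        rw [sub_smul]; abel
      rw [this, norm_smul, hθ, Real.norm_eq_abs, abs_of_nonneg (by linarith), mul_one]
      linarith
  linarith



lemma exitPoint_mem_closure (hopen : IsOpen Ω) (hbd : Bornology.IsBounded Ω) (hθ : ‖θ‖ = 1)
    (hx : x ∈ Ω) : exitPoint Ω θ x ∈ closure Ω := by
  set δ := dirDelta Ω θ x with hδ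
  have hδ0 : 0 < δ := dirDelta_pos hopen hbd hθ hx
  rw [Metric.mem_closure_iff]
  intro ε hε
  set t : ℝ := max (δ - ε/2) 0 with ht
  have ht0 : 0 ≤ t := le_max_right _ _
  have htδ : t < δ := max_lt (by linarith) hδ0
  refine ⟨x + t • θ, mem_of_lt_dirDelta ht0 htδ, ?_⟩
  rw [dist_eq_norm, exitPoint]
  have : x + δ • θ - (x + t • θ) = (δ - t) • θ := by rw [sub_smul]; abel
  rw [this, norm_smul, hθ, Real.norm_eq_abs, abs_of_nonneg (by linarith), mul_one]
  have : δ - ε/2 ≤ t := le_max_left _ _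
  linarith

lemma exitPoint_mem_dirBoundary (hopen : IsOpen Ω) (hbd : Bornology.IsBounded Ω)
    (hθ : ‖θ‖ = 1) (hx : x ∈ Ω) : exitPoint Ω θ x ∈ dirBoundary Ω θ := by
  refine ⟨⟨exitPoint_mem_closure hopen hbd hθ hx, exitPoint_not_mem hopen hbd hθ⟩,
    dirDelta Ω θ x, dirDelta_pos hopen hbd hθ hx, fun t ht0 htr => ?_⟩
  have : exitPoint Ω θ x - t • θ = x + (dirDelta Ω θ x - t) • θ := by
    rw [exitPoint, sub_smul]; abel
  rw [this]
  exact mem_of_lt_dirDelta (by linarith) (by linarith)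

lemma dirDelta_sub_smul (hbd : Bornology.IsBounded Ω) (hθ : ‖θ‖ = 1)
    {z : EuclideanSpace ℝ (Fin d)} (hz : z ∉ Ω) {r : ℝ}
    (hr : ∀ t : ℝ, 0 < t → t < r → z - t • θ ∈ Ω) {t : ℝ} (ht0 : 0 < t) (htr : t < r) :
    dirDelta Ω θ (z - t • θ) = t := by
  have hle : t ≤ dirDelta Ω θ (z - t • θ) := by
    refine le_dirDelta hbd hθ ⟨le_of_lt ht0, fun u hu0 hut => ?_⟩
    have : z - t • θ + u • θ = z - (t - u) • θ := by rw [sub_smul]; abel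
    rw [this]
    exact hr _ (by linarith) (by linarith)
  rcases eq_or_lt_of_le hle with h | h
  · exact h.symm
  · exfalso
    have := mem_of_lt_dirDelta (x := z - t • θ) (le_of_lt ht0) h
    rw [sub_add_cancel] at this
    exact hz this

lemma exitPoint_sub_smul (hbd : Bornology.IsBounded Ω) (hθ : ‖θ‖ = 1)
    {z : EuclideanSpace ℝ (Fin d)} (hz : z ∉ Ω) {r : ℝ}
    (hr : ∀ t : ℝ, 0 < t → t < r → z - t • θ ∈ Ω) {t : ℝ} (ht0 : 0 < t) (htr : t < r) :
    exitPoint Ω θ (z - t • θ) = z := by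
  rw [exitPoint, dirDelta_sub_smul hbd hθ hz hr ht0 htr, sub_add_cancel]

lemma dirDelta_lsc (hopen : IsOpen Ω) (hbd : Bornology.IsBounded Ω) (hθ : ‖θ‖ = 1) :
    LowerSemicontinuous (dirDelta Ω θ) := by
  intro x c hc
  rcases le_or_gt 0 c with hc0 | hc0
  · -- c < δ x, pick s between
    obtain ⟨s, hcs, hsδ⟩ := exists_between hc
    have hs0 : 0 ≤ s := le_trans hc0 (le_of_lt hcs)
    have hK : IsCompact ((fun t : ℝ => x + t • θ) '' Icc 0 s) :=
      (isCompact_Icc).image (continuous_const.add (continuous_id.smul continuous_const))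
    have hKΩ : (fun t : ℝ => x + t • θ) '' Icc 0 s ⊆ Ω := by
      rintro _ ⟨t, ⟨ht0, hts⟩, rfl⟩
      exact mem_of_lt_dirDelta ht0 (lt_of_le_of_lt hts hsδ)
    obtain ⟨ε, hε, hthick⟩ := hK.exists_thickening_subset_open hopen hKΩ
    filter_upwards [Metric.ball_mem_nhds x hε] with y hy
    have : s ≤ dirDelta Ω θ y := by
      refine le_dirDelta hbd hθ ⟨hs0, fun t ht0 hts => ?_⟩
      refine hthick ?_
      rw [Metric.mem_thickening_iff]
      refine ⟨x + t • θ, ⟨t, ⟨ht0, le_of_lt (lt_of_lt_of_le hts le_rfl)⟩, rfl⟩, ?_⟩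
      have : dist (y + t • θ) (x + t • θ) = dist y x := by
        rw [dist_eq_norm, dist_eq_norm]; congr 1; abel
      rw [this]
      exact hy
    linarith
  · filter_upwards with y
    exact lt_of_lt_of_le hc0 dirDelta_nonneg

lemma exitPoint_measurable (hopen : IsOpen Ω) (hbd : Bornology.IsBounded Ω) (hθ : ‖θ‖ = 1) :
    Measurable (exitPoint Ω θ) := by
  have h1 : Measurable (dirDelta Ω θ) := (dirDelta_lsc hopen hbd hθ).measurable
  exact measurable_id.add (h1.smul measurable_const)



lemma isOpen_tube (hopen : IsOpen Ω) (a b : ℝ) :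
    IsOpen {z : EuclideanSpace ℝ (Fin d) | ∀ t : ℝ, a ≤ t → t ≤ b → z - t • θ ∈ Ω} := by
  rw [Metric.isOpen_iff]
  intro z hz
  rcases le_or_gt a b with hab | hab
  · have hK : IsCompact ((fun t : ℝ => z - t • θ) '' Icc a b) :=
      (isCompact_Icc).image (continuous_const.sub (continuous_id.smul continuous_const))
    have hKΩ : (fun t : ℝ => z - t • θ) '' Icc a b ⊆ Ω := by
      rintro _ ⟨t, ⟨ht1, ht2⟩, rfl⟩; exact hz t ht1 ht2
    obtain ⟨ε, hε, hthick⟩ := hK.exists_thickening_subset_open hopen hKΩ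
    refine ⟨ε, hε, fun y hy t ht1 ht2 => hthick ?_⟩
    rw [Metric.mem_thickening_iff]
    refine ⟨z - t • θ, ⟨t, ⟨ht1, ht2⟩, rfl⟩, ?_⟩
    have : dist (y - t • θ) (z - t • θ) = dist y z := by
      rw [dist_eq_norm, dist_eq_norm]; congr 1; abel
    rw [this]; exact hy
  · exact ⟨1, one_pos, fun y _ t ht1 ht2 => absurd (le_trans ht1 ht2) (not_le.2 hab)⟩

lemma dirBoundary_eq :
    dirBoundary Ω θ = (closure Ω \ Ω) ∩
      ⋃ (q : ℚ) (_ : 0 < (q:ℝ)),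
        ⋂ (a : ℚ) (b : ℚ) (_ : 0 < (a:ℝ)) (_ : (a:ℝ) ≤ (b:ℝ)) (_ : (b:ℝ) < (q:ℝ)),
          {z : EuclideanSpace ℝ (Fin d) | ∀ t : ℝ, (a:ℝ) ≤ t → t ≤ (b:ℝ) → z - t • θ ∈ Ω} := by
  ext z
  constructor
  · rintro ⟨hmem, r, hr0, hr⟩
    refine ⟨hmem, ?_⟩
    obtain ⟨q, hq0, hqr⟩ := exists_rat_btwn hr0
    simp only [mem_iUnion, mem_iInter, mem_setOf_eq]
    exact ⟨q, hq0, fun a b ha0 _ hbq t hat htb =>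
      hr t (lt_of_lt_of_le ha0 hat) (by linarith)⟩
  · rintro ⟨hmem, hU⟩
    simp only [mem_iUnion, mem_iInter, mem_setOf_eq] at hU
    obtain ⟨q, hq0, hq⟩ := hU
    refine ⟨hmem, q, hq0, fun t ht0 htq => ?_⟩
    obtain ⟨a, ha0, hat⟩ := exists_rat_btwn ht0
    obtain ⟨b, htb, hbq⟩ := exists_rat_btwn htq
    exact hq a b ha0 (by linarith) hbq t (le_of_lt hat) (le_of_lt htb)

lemma measurableSet_dirBoundary (hopen : IsOpen Ω) :
    MeasurableSet (dirBoundary Ω θ) := by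
  rw [dirBoundary_eq]
  refine (isClosed_closure.measurableSet.diff hopen.measurableSet).inter ?_
  refine MeasurableSet.iUnion fun q => MeasurableSet.iUnion fun _ => ?_
  refine MeasurableSet.iInter fun a => MeasurableSet.iInter fun b => ?_
  refine MeasurableSet.iInter fun _ => MeasurableSet.iInter fun _ => MeasurableSet.iInter fun _ => ?_
  exact (isOpen_tube hopen a b).measurableSet

end Aux

section Coord
variable {n : ℕ} (b : OrthonormalBasis (Fin (n+1)) ℝ (EuclideanSpace ℝ (Fin (n+1))))


noncomputable def psi2 (x : EuclideanSpace ℝ (Fin (n+1))) : Fin n → ℝ :=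
  fun j => b.repr x j.succ

noncomputable def psi1 (x : EuclideanSpace ℝ (Fin (n+1))) : ℝ := b.repr x 0

noncomputable def bigPsi : EuclideanSpace ℝ (Fin (n+1)) ≃ᵐ ((Fin n → ℝ) × ℝ) :=
  (b.measurableEquiv.trans (MeasurableEquiv.toLp 2 (Fin (n+1) → ℝ)).symm).trans
    ((MeasurableEquiv.piFinSuccAbove (fun _ => ℝ) 0).trans MeasurableEquiv.prodComm)

lemma bigPsi_apply (x : EuclideanSpace ℝ (Fin (n+1))) :
    bigPsi b x = (psi2 b x, psi1 b x) := by
  simp only [bigPsi, MeasurableEquiv.trans_apply, MeasurableEquiv.prodComm]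
  rfl

lemma bigPsi_measurePreserving : MeasurePreserving (bigPsi b) volume volume := by
  have h1 := b.measurePreserving_measurableEquiv
  have h2 := EuclideanSpace.volume_preserving_symm_measurableEquiv_toLp (Fin (n+1))
  have h3 := volume_preserving_piFinSuccAbove (fun _ : Fin (n+1) => ℝ) 0
  have h4 : MeasurePreserving (MeasurableEquiv.prodComm : ℝ × (Fin n → ℝ) ≃ᵐ (Fin n → ℝ) × ℝ)
      volume volume := by
    rw [Measure.volume_eq_prod, Measure.volume_eq_prod]
    exact Measure.measurePreserving_swap
  exact (h4.comp (h3.comp (h2.comp h1)))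

variable {θ : EuclideanSpace ℝ (Fin (n+1))} (hb : b 0 = θ)

include hb in
lemma psi2_add_smul (x : EuclideanSpace ℝ (Fin (n+1))) (t : ℝ) :
    psi2 b (x + t • θ) = psi2 b x := by
  funext j
  simp only [psi2, map_add, _root_.map_smul, ← hb, b.repr_self]
  have h0 : (EuclideanSpace.single (0 : Fin (n+1)) (1:ℝ)) j.succ = 0 := by
    rw [EuclideanSpace.single_apply]
    simp [Fin.succ_ne_zero]
  simp only [PiLp.add_apply, PiLp.smul_apply, h0, smul_eq_mul, mul_zero, add_zero]

include hb in
lemma psi1_add_smul (x : EuclideanSpace ℝ (Fin (n+1))) (t : ℝ) :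
    psi1 b (x + t • θ) = psi1 b x + t := by
  simp only [psi1, map_add, _root_.map_smul, ← hb, b.repr_self]
  have : (EuclideanSpace.single (0 : Fin (n+1)) (1:ℝ)) 0 = 1 := by
    rw [EuclideanSpace.single_apply]; simp
  simp [this]




noncomputable def cons0 (y : EuclideanSpace ℝ (Fin n)) : EuclideanSpace ℝ (Fin (n+1)) :=
  (WithLp.equiv 2 (Fin (n+1) → ℝ)).symm (Fin.cons 0 (WithLp.equiv 2 (Fin n → ℝ) y))

@[simp] lemma cons0_zero (y : EuclideanSpace ℝ (Fin n)) : cons0 y 0 = 0 := rfl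
@[simp] lemma cons0_succ (y : EuclideanSpace ℝ (Fin n)) (j : Fin n) : cons0 y j.succ = y j := rfl

lemma cons0_sub (y y' : EuclideanSpace ℝ (Fin n)) : cons0 y - cons0 y' = cons0 (y - y') := by
  ext i
  induction i using Fin.cases with
  | zero => simp [PiLp.sub_apply]
  | succ j => simp [PiLp.sub_apply]

lemma cons0_norm (y : EuclideanSpace ℝ (Fin n)) : ‖cons0 y‖ = ‖y‖ := by
  rw [EuclideanSpace.norm_eq, EuclideanSpace.norm_eq]
  congr 1
  rw [Fin.sum_univ_succ]
  simp

noncomputable def iota (y : EuclideanSpace ℝ (Fin n)) : EuclideanSpace ℝ (Fin (n+1)) :=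
  b.repr.symm (cons0 y)

lemma iota_isometry : Isometry (iota b) := by
  refine Isometry.of_dist_eq fun y y' => ?_
  rw [iota, iota, b.repr.symm.isometry.dist_eq, dist_eq_norm, cons0_sub, cons0_norm,
    ← dist_eq_norm]


include hb in
lemma hypProj_eq (x : EuclideanSpace ℝ (Fin (n+1))) :
    hypProj θ x = iota b ((WithLp.equiv 2 (Fin n → ℝ)).symm (psi2 b x)) := by
  apply b.repr.injective
  rw [iota, LinearIsometryEquiv.apply_symm_apply]
  rw [hypProj, map_sub, _root_.map_smul]
  have hxθ : ⟪x, θ⟫ = b.repr x 0 := by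
    rw [b.repr_apply_apply, hb, real_inner_comm]
  ext i
  induction i using Fin.cases with
  | zero =>
      simp only [PiLp.sub_apply, PiLp.smul_apply, cons0_zero, ← hb, b.repr_self,
        smul_eq_mul]
      rw [hb, hxθ, EuclideanSpace.single_apply]
      simp
  | succ j =>
      simp only [PiLp.sub_apply, PiLp.smul_apply, cons0_succ, ← hb, b.repr_self,
        smul_eq_mul]
      rw [EuclideanSpace.single_apply]
      simp only [Fin.succ_ne_zero, if_false, mul_zero, sub_zero]
      rfl


end Coord


lemma mp_image_null {α β : Type*} [MeasurableSpace α] [MeasurableSpace β]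
    {μ : Measure α} {ν : Measure β} (e : α ≃ᵐ β) (h : MeasurePreserving e μ ν)
    (s : Set α) : ν (⇑e '' s) = 0 ↔ μ s = 0 := by
  constructor
  · intro h0
    obtain ⟨t, hst, htm, ht0⟩ := exists_measurable_superset_of_null h0
    have : μ (⇑e ⁻¹' t) = 0 := by rw [h.measure_preimage htm.nullMeasurableSet]; exact ht0
    exact measure_mono_null (fun x hx => hst ⟨x, hx, rfl⟩) this
  · intro h0
    obtain ⟨t, hst, htm, ht0⟩ := exists_measurable_superset_of_null h0
    have h2 : ν (⇑e.symm ⁻¹' t) = 0 := by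
      rw [(h.symm e).measure_preimage htm.nullMeasurableSet]; exact ht0
    refine measure_mono_null ?_ h2
    rintro _ ⟨x, hx, rfl⟩
    simpa using hst hx

lemma hausdorff_null_iff_volume_null {n : ℕ} (T : Set (EuclideanSpace ℝ (Fin n))) :
    μH[(n:ℝ)] T = 0 ↔ volume T = 0 := by
  set e := WithLp.equiv 2 (Fin n → ℝ)
  have hlip : LipschitzWith 1 ⇑e := PiLp.lipschitzWith_ofLp 2 _
  have hanti := PiLp.antilipschitzWith_ofLp 2 (fun _ : Fin n => ℝ)
  have hlipsymm := hanti.to_rightInverse e.right_inv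
  have hpi : (μH[(n:ℝ)] : Measure (Fin n → ℝ)) = volume := by
    have := hausdorffMeasure_pi_real (ι := Fin n)
    rwa [Fintype.card_fin] at this
  constructor
  · intro h0
    have h1 := hlip.hausdorffMeasure_image_le (by positivity : (0:ℝ) ≤ n) T
    rw [h0, mul_zero] at h1
    have h2 : (μH[(n:ℝ)] (⇑e '' T)) = 0 := le_antisymm (by simpa using h1) zero_le
    rw [hpi] at h2
    have : T = ⇑e.symm '' (⇑e '' T) := by
      rw [Set.image_image]; simp
    -- volume T = volume (e '' T) via measure preserving
    have hmp := EuclideanSpace.volume_preserving_symm_measurableEquiv_toLp (Fin n)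
    have := (mp_image_null (MeasurableEquiv.toLp 2 (Fin n → ℝ)).symm hmp T)
    rw [← this]
    exact h2
  · intro h0
    have hmp := EuclideanSpace.volume_preserving_symm_measurableEquiv_toLp (Fin n)
    have h2 : volume (⇑e '' T) = 0 :=
      (mp_image_null (MeasurableEquiv.toLp 2 (Fin n → ℝ)).symm hmp T).2 h0
    rw [← hpi] at h2
    have h1 := hlipsymm.hausdorffMeasure_image_le (by positivity : (0:ℝ) ≤ n) (⇑e '' T)
    rw [h2, mul_zero] at h1
    have himg : e.invFun '' (⇑e '' T) = T := by
      rw [Set.image_image]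
      have : ∀ x : EuclideanSpace ℝ (Fin n), e.invFun (e x) = x := fun x => e.left_inv x
      simp only [this, Set.image_id']
    rw [himg] at h1
    exact le_antisymm h1 zero_le


lemma bridge {n : ℕ} (b : OrthonormalBasis (Fin (n+1)) ℝ (EuclideanSpace ℝ (Fin (n+1))))
    {θ : EuclideanSpace ℝ (Fin (n+1))} (hb : b 0 = θ) (S : Set (EuclideanSpace ℝ (Fin (n+1)))) :
    μH[(n:ℝ)] (hypProj θ '' S) = 0 ↔ volume (psi2 b '' S) = 0 := by
  have himg : hypProj θ '' S
      = iota b '' ((WithLp.equiv 2 (Fin n → ℝ)).symm '' (psi2 b '' S)) := by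
    rw [Set.image_image, Set.image_image]
    exact Set.image_congr' (fun x => hypProj_eq b hb x)
  rw [himg, (iota_isometry b).hausdorffMeasure_image (Or.inl (by positivity)),
    hausdorff_null_iff_volume_null]
  have hcoe : ⇑(WithLp.equiv 2 (Fin n → ℝ)).symm
      = ⇑(MeasurableEquiv.toLp 2 (Fin n → ℝ)).symm.symm := by
    rfl
  rw [hcoe]
  exact mp_image_null (MeasurableEquiv.toLp 2 (Fin n → ℝ)).symm.symm
    (EuclideanSpace.volume_preserving_symm_measurableEquiv_toLp (Fin n)).symm _


theorem stmt8 {d : ℕ} (Ω : Set (EuclideanSpace ℝ (Fin d)))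
    (hopen : IsOpen Ω) (hne : Ω.Nonempty) (hbd : Bornology.IsBounded Ω)
    (θ : EuclideanSpace ℝ (Fin d)) (hθ : ‖θ‖ = 1)
    (A : Set (EuclideanSpace ℝ (Fin d))) (hAne : A.Nonempty)
    (hA : A ⊆ closure Ω \ Ω) :
    (∃ B : Set (EuclideanSpace ℝ (Fin d)), MeasurableSet B ∧ A ⊆ B ∧ dirMeas Ω θ B = 0) ↔
      Measure.hausdorffMeasure ((d : ℝ) - 1) (hypProj θ '' (A ∩ dirBoundary Ω θ)) = 0 := by
  cases d with
  | zero =>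
      exfalso
      obtain ⟨a, ha⟩ := hAne
      obtain ⟨x, hx⟩ := hne
      haveI : Subsingleton (EuclideanSpace ℝ (Fin 0)) :=
        ⟨fun u v => by ext i; exact Fin.elim0 i⟩
      exact (hA ha).2 ((Subsingleton.elim a x) ▸ hx)
  | succ n =>
      -- construct orthonormal basis with b 0 = θ
      have hcard : Module.finrank ℝ (EuclideanSpace ℝ (Fin (n+1))) = Fintype.card (Fin (n+1)) := by
        simp [finrank_euclideanSpace_fin]
      have hsub : ∀ i j : ({0} : Set (Fin (n+1))), i = j := by
        rintro ⟨i, hi⟩ ⟨j, hj⟩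
        simp only [Set.mem_singleton_iff] at hi hj
        subst hi; subst hj; rfl
      have horth : Orthonormal ℝ (Set.restrict ({0} : Set (Fin (n+1))) (fun _ => θ)) := by
        constructor
        · intro i; exact hθ
        · intro i j hij; exact absurd (hsub i j) hij
      obtain ⟨b, hb0⟩ := horth.exists_orthonormalBasis_extension_of_card_eq hcard
      have hb : b 0 = θ := hb0 0 rfl
      have hcast : ((n+1:ℕ):ℝ) - 1 = (n:ℝ) := by push_cast; ring
      rw [hcast]
      constructor
      · rintro ⟨B, hBm, hAB, hB0⟩
        rw [bridge b hb]
        set M : Set (EuclideanSpace ℝ (Fin (n+1))) :=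
          {x | x ∈ Ω ∧ exitPoint Ω θ x ∈ B} with hM
        have hMm : MeasurableSet M := by
          have : M = Ω ∩ (exitPoint Ω θ) ⁻¹' B := rfl
          rw [this]
          exact hopen.measurableSet.inter ((exitPoint_measurable hopen hbd hθ) hBm)
        have hMvol : volume M = 0 := hB0
        set Ψ := bigPsi b with hΨdef
        have hΨ := bigPsi_measurePreserving b
        set M' : Set ((Fin n → ℝ) × ℝ) := ⇑Ψ '' M with hM'
        have hM'm : MeasurableSet M' := by
          rw [hM', MeasurableEquiv.image_eq_preimage_symm]
          exact Ψ.symm.measurable hMm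
        have hM'0 : volume M' = 0 := (mp_image_null Ψ hΨ M).2 hMvol
        rw [Measure.volume_eq_prod] at hM'0
        have h4 := (Measure.measure_prod_null hM'm).1 hM'0
        have h5 : volume {y : Fin n → ℝ | ¬ volume (Prod.mk y ⁻¹' M') = 0} = 0 := by
          have h4' : ∀ᵐ y : Fin n → ℝ, volume (Prod.mk y ⁻¹' M') = 0 := by
            filter_upwards [h4] with y hy using hy
          exact h4'
        have hsubset : psi2 b '' (A ∩ dirBoundary Ω θ)
            ⊆ {y : Fin n → ℝ | ¬ volume (Prod.mk y ⁻¹' M') = 0} := by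
          rintro _ ⟨z, ⟨hzA, hzB⟩, rfl⟩
          obtain ⟨⟨hzc, hznot⟩, r, hr0, hr⟩ := hzB
          intro h0
          have hIoo : Ioo (psi1 b z - r) (psi1 b z) ⊆ Prod.mk (psi2 b z) ⁻¹' M' := by
            intro s hs
            set t := psi1 b z - s with htdef
            have ht0 : 0 < t := by simp only [htdef]; linarith [hs.2]
            have htr : t < r := by simp only [htdef]; linarith [hs.1]
            have hxΩ : z - t • θ ∈ Ω := hr t ht0 htr
            have hexit : exitPoint Ω θ (z - t • θ) = z :=
              exitPoint_sub_smul hbd hθ hznot hr ht0 htr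
            have hmem : z - t • θ ∈ M := ⟨hxΩ, by rw [hexit]; exact hAB hzA⟩
            have hzsub : z - t • θ = z + (-t) • θ := by
              rw [neg_smul, ← sub_eq_add_neg]
            have hpsi : Ψ (z - t • θ) = (psi2 b z, s) := by
              rw [bigPsi_apply, hzsub, psi2_add_smul b hb, psi1_add_smul b hb]
              simp only [htdef]
              congr 1
              ring
            show (psi2 b z, s) ∈ M'
            rw [← hpsi]
            exact Set.mem_image_of_mem _ hmem
          have := measure_mono (μ := (volume : Measure ℝ)) hIoo
          rw [h0] at this
          have h6 : volume (Ioo (psi1 b z - r) (psi1 b z)) = 0 := le_antisymm this zero_le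
          rw [Real.volume_Ioo] at h6
          have : psi1 b z - (psi1 b z - r) ≤ 0 := by
            by_contra hcon
            push_neg at hcon
            exact (ENNReal.ofReal_pos.2 hcon).ne' h6
          linarith
        exact measure_mono_null hsubset h5
      · intro hH
        have hvol0 : volume (psi2 b '' (A ∩ dirBoundary Ω θ)) = 0 := (bridge b hb _).1 hH
        obtain ⟨N, hsubN, hNm, hN0⟩ := exists_measurable_superset_of_null hvol0
        have hpsi2m : Measurable (psi2 b) := by
          have : psi2 b = Prod.fst ∘ ⇑(bigPsi b) := by
            funext x
            simp [bigPsi_apply]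
          rw [this]
          exact measurable_fst.comp (bigPsi b).measurable
        set Bset : Set (EuclideanSpace ℝ (Fin (n+1))) :=
          (psi2 b ⁻¹' N ∩ (closure Ω \ Ω)) ∪ ((closure Ω \ Ω) \ dirBoundary Ω θ) with hBset
        refine ⟨Bset, ?_, ?_, ?_⟩
        · exact ((hpsi2m hNm).inter
            (isClosed_closure.measurableSet.diff hopen.measurableSet)).union
            ((isClosed_closure.measurableSet.diff hopen.measurableSet).diff
              (measurableSet_dirBoundary hopen))
        · intro a ha
          by_cases hdb : a ∈ dirBoundary Ω θ
          · exact Or.inl ⟨hsubN (Set.mem_image_of_mem _ ⟨ha, hdb⟩), hA ha⟩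
          · exact Or.inr ⟨hA ha, hdb⟩
        · show volume {x | x ∈ Ω ∧ exitPoint Ω θ x ∈ Bset} = 0
          have hsub2 : {x | x ∈ Ω ∧ exitPoint Ω θ x ∈ Bset} ⊆ psi2 b ⁻¹' N := by
            rintro x ⟨hxΩ, hexit⟩
            have hdb := exitPoint_mem_dirBoundary hopen hbd hθ hxΩ
            have hmem : exitPoint Ω θ x ∈ psi2 b ⁻¹' N := by
              rcases hexit with h | h
              · exact h.1
              · exact absurd hdb h.2
            have : psi2 b (exitPoint Ω θ x) = psi2 b x := by
              rw [exitPoint, psi2_add_smul b hb]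
            rwa [Set.mem_preimage, ← this]
          refine measure_mono_null hsub2 ?_
          have hpre : psi2 b ⁻¹' N = ⇑(bigPsi b) ⁻¹' (N ×ˢ (Set.univ : Set ℝ)) := by
            ext x
            simp [bigPsi_apply]
          rw [hpre, (bigPsi_measurePreserving b).measure_preimage
            ((hNm.prod MeasurableSet.univ).nullMeasurableSet)]
          rw [Measure.volume_eq_prod, Measure.prod_prod, hN0, zero_mul]
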